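/- arXiv:2112.01604 — 9 statements merged into one kernel-verified Lean document; each statement's English description precedes it below -/
import Mathlib

section
/- Let K_vco, τ₁, τ₂ > 0, k > 1/π, ω ∈ ℝ, and let (x, θ) : I → ℝ² be a differentiable solution on an interval I of the system ẋ = v_e(θ), θ̇ = ω − (K_vco/τ₁)(x + τ₂ v_e(θ)). Then for every t ∈ I, the derivative of t ↦ V(x(t), θ(t)) equals −(K_vco τ₂/τ₁) v_e(θ(t))² ≤ 0; in particular t ↦ V(x(t), θ(t)) is nonincreasing on I. -/
open Real

/-- along any solution of the PLL system, the Lyapunov function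
`V(x, θ) = (K_vco/(2τ₁))(x − τ₁ω/K_vco)² + ∫₀^θ v_e(σ)dσ` has derivative
`−(K_vco τ₂/τ₁) v_e(θ(t))² ≤ 0`; in particular it is nonincreasing. -/
theorem lyapunov_derivative_along_solutions
    (Kvco τ₁ τ₂ : ℝ) (hK : 0 < Kvco) (hτ₁ : 0 < τ₁) (hτ₂ : 0 < τ₂)
    (k : ℝ) (hk : 1 / π < k) (ω : ℝ) (ve : ℝ → ℝ)
    (hve1 : ∀ (m : ℤ) (θ : ℝ),
      -(1 / k) + 2 * π * m ≤ θ → θ < 1 / k + 2 * π * m →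
      ve θ = k * θ - 2 * π * k * m)
    (hve2 : ∀ (m : ℤ) (θ : ℝ),
      1 / k + 2 * π * m ≤ θ → θ < -(1 / k) + 2 * π * (m + 1) →
      ve θ = (-θ + π + 2 * π * m) / (π - 1 / k))
    (I : Set ℝ) (hI : I.OrdConnected)
    (x θ : ℝ → ℝ)
    (hx : ∀ t ∈ I, HasDerivWithinAt x (ve (θ t)) I t)
    (hθ : ∀ t ∈ I,
      HasDerivWithinAt θ (ω - (Kvco / τ₁) * (x t + τ₂ * ve (θ t))) I t) :
    (∀ t ∈ I,
      HasDerivWithinAt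
        (fun s => (Kvco / (2 * τ₁)) * (x s - τ₁ * ω / Kvco) ^ 2 +
          ∫ σ in (0:ℝ)..(θ s), ve σ)
        (-(Kvco * τ₂ / τ₁) * (ve (θ t)) ^ 2) I t ∧
      -(Kvco * τ₂ / τ₁) * (ve (θ t)) ^ 2 ≤ 0) ∧
    AntitoneOn
      (fun s => (Kvco / (2 * τ₁)) * (x s - τ₁ * ω / Kvco) ^ 2 +
        ∫ σ in (0:ℝ)..(θ s), ve σ) I := by
  have hπ : (0:ℝ) < π := Real.pi_pos
  have hk0 : 0 < k := lt_trans (by positivity) hk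
  have hik : 0 < 1 / k := by positivity
  have hikπ : 1 / k < π := (div_lt_iff₀ hk0).mpr (by
    have := (div_lt_iff₀ hπ).mp hk
    nlinarith)
  -- EqOn lemmas on closed intervals
  have E1 : ∀ (m : ℤ) (σ : ℝ), -(1/k) + 2*π*m ≤ σ → σ ≤ 1/k + 2*π*m →
      ve σ = k * σ - 2*π*k*m := by
    intro m σ h1 h2
    rcases lt_or_eq_of_le h2 with h2 | h2
    · exact hve1 m σ h1 h2
    · subst h2
      rw [hve2 m _ le_rfl (by push_cast; nlinarith)]
      have h0 : π - 1/k ≠ 0 := ne_of_gt (by linarith)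
      rw [div_eq_iff h0]
      field_simp
      ring
  have E2 : ∀ (m : ℤ) (σ : ℝ), 1/k + 2*π*m ≤ σ → σ ≤ -(1/k) + 2*π*(m+1) →
      ve σ = (-σ + π + 2*π*m) / (π - 1/k) := by
    intro m σ h1 h2
    rcases lt_or_eq_of_le h2 with h2 | h2
    · exact hve2 m σ h1 h2
    · subst h2
      rw [hve1 (m+1) _ (by push_cast; linarith) (by push_cast; nlinarith)]
      have h0 : π - 1/k ≠ 0 := ne_of_gt (by linarith)
      rw [eq_div_iff h0]
      push_cast
      field_simp
      ring
  -- continuity of ve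
  have hcont : Continuous ve := by
    rw [continuous_iff_continuousAt]
    intro θ₀
    -- helper: continuity within from an interval where ve matches a continuous g
    have key : ∀ (a b : ℝ) (g : ℝ → ℝ), Continuous g →
        (∀ σ, a ≤ σ → σ ≤ b → ve σ = g σ) → a ≤ θ₀ → θ₀ ≤ b →
        (θ₀ < b → ContinuousWithinAt ve (Set.Ici θ₀) θ₀) ∧
        (a < θ₀ → ContinuousWithinAt ve (Set.Iic θ₀) θ₀) := by
      intro a b g hg heq ha hb
      constructor
      · intro hlt
        refine (hg.continuousAt.continuousWithinAt).congr_of_eventuallyEq ?_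
          (heq θ₀ ha hb)
        exact Filter.eventuallyEq_of_mem (Ico_mem_nhdsGE hlt)
          (fun σ hσ => heq σ (le_trans ha hσ.1) hσ.2.le)
      · intro hlt
        refine (hg.continuousAt.continuousWithinAt).congr_of_eventuallyEq ?_
          (heq θ₀ ha hb)
        exact Filter.eventuallyEq_of_mem (Ioc_mem_nhdsLE hlt)
          (fun σ hσ => heq σ hσ.1.le (le_trans hσ.2 hb))
    -- choose m with -(1/k)+2πm ≤ θ₀ < -(1/k)+2π(m+1)
    set m : ℤ := ⌊(θ₀ + 1/k) / (2*π)⌋ with hm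
    have h2π : (0:ℝ) < 2*π := by linarith
    have hfl : (m:ℝ) ≤ (θ₀ + 1/k) / (2*π) := Int.floor_le _
    have hfl' : (θ₀ + 1/k) / (2*π) < m + 1 := Int.lt_floor_add_one _
    have hA1 : -(1/k) + 2*π*m ≤ θ₀ := by
      have := (le_div_iff₀ h2π).mp hfl
      nlinarith
    have hA2 : θ₀ < -(1/k) + 2*π*(m+1) := by
      have := (div_lt_iff₀ h2π).mp hfl'
      push_cast
      nlinarith
    apply continuousAt_iff_continuous_left_right.mpr
    have hg1 : Continuous (fun σ : ℝ => k * σ - 2*π*k*m) :=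
      (continuous_const.mul continuous_id).sub continuous_const
    have hg2 : ∀ m' : ℤ, Continuous (fun σ : ℝ => (-σ + π + 2*π*(m':ℝ)) / (π - 1/k)) :=
      fun m' => ((continuous_id.neg.add continuous_const).add continuous_const).div_const _
    rcases le_or_gt θ₀ (1/k + 2*π*m) with hB | hB
    · -- θ₀ in first piece [A m, B m]
      have K1 := key (-(1/k) + 2*π*m) (1/k + 2*π*m) _ hg1
        (fun σ h1 h2 => E1 m σ h1 h2) hA1 hB
      constructor
      · -- left continuity
        rcases lt_or_eq_of_le hA1 with h | h
        · exact K1.2 h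
        · -- θ₀ = A m; use previous interval ending at A m
          have K2 := key (1/k + 2*π*(m-1)) (-(1/k) + 2*π*m)
            (fun σ : ℝ => (-σ + π + 2*π*(m-1:ℤ)) / (π - 1/k)) (hg2 (m-1))
            (fun σ h1 h2 => E2 (m-1) σ (by push_cast at h1 ⊢; linarith)
              (by push_cast; linarith)) (by push_cast; nlinarith [h]) h.ge
          exact K2.2 (by push_cast; nlinarith [h])
      · -- right continuity
        rcases lt_or_eq_of_le hB with h | h
        · exact K1.1 h
        · -- θ₀ = B m; use next interval starting at B m
          have K2 := key (1/k + 2*π*m) (-(1/k) + 2*π*(m+1))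
            (fun σ : ℝ => (-σ + π + 2*π*(m:ℤ)) / (π - 1/k)) (hg2 m)
            (fun σ h1 h2 => E2 m σ h1 (by push_cast at h2 ⊢; linarith))
            h.ge (by push_cast; push_cast at hA2; linarith)
          exact K2.1 hA2
    · -- θ₀ in second piece (B m, A (m+1))
      have K2 := key (1/k + 2*π*m) (-(1/k) + 2*π*(m+1))
        (fun σ : ℝ => (-σ + π + 2*π*(m:ℤ)) / (π - 1/k)) (hg2 m)
        (fun σ h1 h2 => E2 m σ h1 (by push_cast at h2 ⊢; linarith))
        hB.le (by push_cast at hA2 ⊢; linarith)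
      exact ⟨K2.2 hB, K2.1 hA2⟩
  -- main derivative computation
  have hmain : ∀ t ∈ I,
      HasDerivWithinAt
        (fun s => (Kvco / (2 * τ₁)) * (x s - τ₁ * ω / Kvco) ^ 2 +
          ∫ σ in (0:ℝ)..(θ s), ve σ)
        (-(Kvco * τ₂ / τ₁) * (ve (θ t)) ^ 2) I t := by
    intro t ht
    have h1 : HasDerivWithinAt
        (fun s => (Kvco / (2 * τ₁)) * (x s - τ₁ * ω / Kvco) ^ 2)
        ((Kvco / (2 * τ₁)) * (2 * (x t - τ₁ * ω / Kvco) ^ 1 * ve (θ t))) I t := by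
      exact (((hx t ht).sub_const _).pow 2).const_mul _
    have hF : HasDerivAt (fun u => ∫ σ in (0:ℝ)..u, ve σ) (ve (θ t)) (θ t) :=
      intervalIntegral.integral_hasDerivAt_right
        (hcont.intervalIntegrable _ _)
        (hcont.stronglyMeasurableAtFilter _ _)
        hcont.continuousAt
    have h2 : HasDerivWithinAt (fun s => ∫ σ in (0:ℝ)..(θ s), ve σ)
        (ve (θ t) * (ω - (Kvco / τ₁) * (x t + τ₂ * ve (θ t)))) I t :=
      hF.comp_hasDerivWithinAt t (hθ t ht)
    have := h1.add h2
    refine HasDerivWithinAt.congr_deriv this ?_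
    have hK0 : Kvco ≠ 0 := ne_of_gt hK
    have hτ0 : τ₁ ≠ 0 := ne_of_gt hτ₁
    field_simp
    ring
  refine ⟨fun t ht => ⟨hmain t ht, ?_⟩, ?_⟩
  · have : 0 ≤ (Kvco * τ₂ / τ₁) * (ve (θ t)) ^ 2 := by positivity
    linarith
  · -- antitone
    have hconv : Convex ℝ I := convex_iff_ordConnected.mpr hI
    apply antitoneOn_of_deriv_nonpos hconv
    · exact fun t ht => (hmain t ht).continuousWithinAt
    · intro t ht
      have ht' : t ∈ I := interior_subset ht
      exact (((hmain t ht').hasDerivAt (mem_interior_iff_mem_nhds.mp ht)).differentiableAt).differentiableWithinAt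
    · intro t ht
      have ht' : t ∈ I := interior_subset ht
      have hd := (hmain t ht').hasDerivAt (mem_interior_iff_mem_nhds.mp ht)
      rw [hd.deriv]
      have : 0 ≤ (Kvco * τ₂ / τ₁) * (ve (θ t)) ^ 2 := by positivity
      linarith
end

section
/- Let a > 0, k > 1/π with a²k > 4 and b = √(a² − 4/k). Let (y, θ) : I → ℝ² be a differentiable solution on an interval I of the linear system θ̇ = y, ẏ = −aky − kθ, such that u(t) := y(t) + ((a−b)k/2)θ(t) > 0 and v(t) := y(t) + ((a+b)k/2)θ(t) > 0 for all t ∈ I. Then the function t ↦ u(t)^{(b−a)/b} · v(t)^{(b+a)/b} is constant on I (a first integral of the system in this region). -/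
open Real

/-- in the node case `a²k > 4`, along solutions of
`θ̇ = y`, `ẏ = −aky − kθ` staying in the region where
`u = y + ((a−b)k/2)θ > 0` and `v = y + ((a+b)k/2)θ > 0`, the quantity
`u^{(b−a)/b} · v^{(b+a)/b}` is a first integral. -/
theorem node_first_integral
    (a k : ℝ) (ha : 0 < a) (hk : 1 / π < k) (hnode : 4 < a ^ 2 * k)
    (b : ℝ) (hb : b = Real.sqrt (a ^ 2 - 4 / k))
    (I : Set ℝ) (hI : I.OrdConnected)
    (y θ : ℝ → ℝ)
    (hθ : ∀ t ∈ I, HasDerivWithinAt θ (y t) I t)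
    (hy : ∀ t ∈ I, HasDerivWithinAt y (-(a * k) * y t - k * θ t) I t)
    (hu : ∀ t ∈ I, 0 < y t + ((a - b) * k / 2) * θ t)
    (hv : ∀ t ∈ I, 0 < y t + ((a + b) * k / 2) * θ t) :
    ∀ t₁ ∈ I, ∀ t₂ ∈ I,
      (y t₁ + ((a - b) * k / 2) * θ t₁) ^ ((b - a) / b) *
        (y t₁ + ((a + b) * k / 2) * θ t₁) ^ ((b + a) / b) =
      (y t₂ + ((a - b) * k / 2) * θ t₂) ^ ((b - a) / b) *
        (y t₂ + ((a + b) * k / 2) * θ t₂) ^ ((b + a) / b) := by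
  have hkpos : 0 < k := lt_trans (by positivity) hk
  have hpos : 0 < a ^ 2 - 4 / k := by
    rw [sub_pos, div_lt_iff₀ hkpos]; linarith
  have hb2 : b ^ 2 = a ^ 2 - 4 / k := by
    rw [hb, sq_sqrt hpos.le]
  have hb2' : b ^ 2 * k = a ^ 2 * k - 4 := by
    rw [hb2]; field_simp
  set u : ℝ → ℝ := fun t => y t + ((a - b) * k / 2) * θ t with hudef
  set v : ℝ → ℝ := fun t => y t + ((a + b) * k / 2) * θ t with hvdef
  have hu' : ∀ t ∈ I, HasDerivWithinAt u (-((a + b) * k / 2) * u t) I t := by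
    intro t ht
    have h := (hy t ht).add (HasDerivWithinAt.const_mul ((a - b) * k / 2) (hθ t ht))
    refine h.congr_deriv (Eq.symm ?_)
    show -((a + b) * k / 2) * (y t + ((a - b) * k / 2) * θ t) =
      (-(a * k) * y t - k * θ t) + ((a - b) * k / 2) * y t
    linear_combination (k / 4 * θ t) * hb2'
  have hv' : ∀ t ∈ I, HasDerivWithinAt v (-((a - b) * k / 2) * v t) I t := by
    intro t ht
    have h := (hy t ht).add (HasDerivWithinAt.const_mul ((a + b) * k / 2) (hθ t ht))
    refine h.congr_deriv (Eq.symm ?_)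
    show -((a - b) * k / 2) * (y t + ((a + b) * k / 2) * θ t) =
      (-(a * k) * y t - k * θ t) + ((a + b) * k / 2) * y t
    linear_combination (k / 4 * θ t) * hb2'
  set G : ℝ → ℝ := fun t => (b - a) / b * Real.log (u t) + (b + a) / b * Real.log (v t)
    with hGdef
  have hG' : ∀ t ∈ I, HasDerivWithinAt G 0 I t := by
    intro t ht
    have hlu : HasDerivWithinAt (fun s => Real.log (u s))
        ((-((a + b) * k / 2) * u t) / u t) I t := (hu' t ht).log (hu t ht).ne'
    have hlv : HasDerivWithinAt (fun s => Real.log (v s))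
        ((-((a - b) * k / 2) * v t) / v t) I t := (hv' t ht).log (hv t ht).ne'
    have hlu2 : HasDerivWithinAt (fun s => Real.log (u s)) (-((a + b) * k / 2)) I t := by
      convert hlu using 1
      rw [mul_div_cancel_right₀ _ (hu t ht).ne']
    have hlv2 : HasDerivWithinAt (fun s => Real.log (v s)) (-((a - b) * k / 2)) I t := by
      convert hlv using 1
      rw [mul_div_cancel_right₀ _ (hv t ht).ne']
    have h := (hlu2.const_mul ((b - a) / b)).add (hlv2.const_mul ((b + a) / b))
    refine h.congr_deriv (Eq.symm ?_)
    ring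
  have hconst : ∀ t₁ ∈ I, ∀ t₂ ∈ I, G t₁ = G t₂ := by
    intro t₁ h₁ t₂ h₂
    have := Convex.norm_image_sub_le_of_norm_hasDerivWithin_le
      (f := G) (f' := fun _ => (0 : ℝ)) (C := 0) (fun t ht => hG' t ht)
      (fun t _ => by simp) hI.convex h₁ h₂
    have h0 : G t₂ - G t₁ = 0 := by
      simpa using norm_le_zero_iff.mp (by simpa using this)
    linarith
  have key : ∀ t ∈ I, u t ^ ((b - a) / b) * v t ^ ((b + a) / b) = Real.exp (G t) := by
    intro t ht
    rw [Real.rpow_def_of_pos (hu t ht), Real.rpow_def_of_pos (hv t ht), ← Real.exp_add, hGdef]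
    congr 1
    ring
  intro t₁ h₁ t₂ h₂
  have := key t₁ h₁
  have := key t₂ h₂
  show u t₁ ^ ((b - a) / b) * v t₁ ^ ((b + a) / b) =
    u t₂ ^ ((b - a) / b) * v t₂ ^ ((b + a) / b)
  rw [key t₁ h₁, key t₂ h₂, hconst t₁ h₁ t₂ h₂]
end

section
/- Let a > 0 and k = 4/a² (the case a²k = 4). Let (y, θ) : I → ℝ² be a differentiable solution on an interval I of the linear system θ̇ = y, ẏ = −(4/a)y − (4/a²)θ, such that 2θ(t) + a y(t) > 0 for all t ∈ I. Then the function t ↦ 2θ(t)/(2θ(t) + a y(t)) + ln(2θ(t) + a y(t)) is constant on I. -/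
open Real

/-- in the degenerate-node case `k = 4/a²`, along solutions of
`θ̇ = y`, `ẏ = −(4/a)y − (4/a²)θ` staying in the region `2θ + ay > 0`, the quantity
`2θ/(2θ + ay) + ln(2θ + ay)` is a first integral. -/
theorem degenerate_node_first_integral
    (a : ℝ) (ha : 0 < a) (k : ℝ) (hk : k = 4 / a ^ 2)
    (I : Set ℝ) (hI : I.OrdConnected)
    (y θ : ℝ → ℝ)
    (hθ : ∀ t ∈ I, HasDerivWithinAt θ (y t) I t)
    (hy : ∀ t ∈ I, HasDerivWithinAt y (-(4 / a) * y t - (4 / a ^ 2) * θ t) I t)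
    (hpos : ∀ t ∈ I, 0 < 2 * θ t + a * y t) :
    ∀ t₁ ∈ I, ∀ t₂ ∈ I,
      2 * θ t₁ / (2 * θ t₁ + a * y t₁) + Real.log (2 * θ t₁ + a * y t₁) =
      2 * θ t₂ / (2 * θ t₂ + a * y t₂) + Real.log (2 * θ t₂ + a * y t₂) := by
  intro t₁ ht₁ t₂ ht₂
  have ha0 : a ≠ 0 := ne_of_gt ha
  set F : ℝ → ℝ := fun t =>
    2 * θ t / (2 * θ t + a * y t) + Real.log (2 * θ t + a * y t) with hF
  have hconv : Convex ℝ I := convex_iff_ordConnected.mpr hI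
  have hderiv : ∀ t ∈ I, HasDerivWithinAt F 0 I t := by
    intro t ht
    have hu : HasDerivWithinAt (fun t => 2 * θ t + a * y t)
        (-(2 / a) * (2 * θ t + a * y t)) I t := by
      have := ((hθ t ht).const_mul 2).add ((hy t ht).const_mul a)
      refine this.congr_deriv ?_
      field_simp
      ring
    have hune : 2 * θ t + a * y t ≠ 0 := ne_of_gt (hpos t ht)
    have h1 : HasDerivWithinAt (fun t => 2 * θ t / (2 * θ t + a * y t))
        ((2 * y t * (2 * θ t + a * y t) -
          2 * θ t * (-(2 / a) * (2 * θ t + a * y t))) / (2 * θ t + a * y t) ^ 2)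
        I t := ((hθ t ht).const_mul 2).div hu hune
    have h2 : HasDerivWithinAt (fun t => Real.log (2 * θ t + a * y t))
        ((-(2 / a) * (2 * θ t + a * y t)) / (2 * θ t + a * y t)) I t := hu.log hune
    have := h1.add h2
    refine this.congr_deriv ?_
    field_simp
    ring
  have key := hconv.norm_image_sub_le_of_norm_hasDerivWithin_le
    (f' := fun _ => (0 : ℝ)) (C := 0) hderiv (fun x hx => by simp) ht₁ ht₂
  have : ‖F t₂ - F t₁‖ ≤ 0 := by simpa using key
  have : F t₂ = F t₁ := by
    have := norm_sub_eq_zero_iff.mp (le_antisymm this (norm_nonneg _))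
    exact this
  simpa [hF] using this.symm
end

section
/- Let a > 0, k > 1/π with a²k < 4 and b = √(4/k − a²). Let (y, θ) : I → ℝ² be a differentiable solution on an interval I of the linear system θ̇ = y, ẏ = −aky − kθ, such that θ(t) > 0 for all t ∈ I. Then the function t ↦ (1/2)ln(y(t)² + ak y(t)θ(t) + k θ(t)²) − (a/b)·arctan((a θ(t) + (2/k) y(t))/(b θ(t))) is constant on I. -/
open Real

/-- in the focus case `a²k < 4`, along solutions of
`θ̇ = y`, `ẏ = −aky − kθ` staying in the region `θ > 0`, the quantity
`(1/2)ln(y² + akyθ + kθ²) − (a/b)·arctan((aθ + (2/k)y)/(bθ))` is a first integral. -/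
theorem focus_first_integral
    (a k : ℝ) (ha : 0 < a) (hk : 1 / π < k) (hfocus : a ^ 2 * k < 4)
    (b : ℝ) (hb : b = Real.sqrt (4 / k - a ^ 2))
    (I : Set ℝ) (hI : I.OrdConnected)
    (y θ : ℝ → ℝ)
    (hθ : ∀ t ∈ I, HasDerivWithinAt θ (y t) I t)
    (hy : ∀ t ∈ I, HasDerivWithinAt y (-(a * k) * y t - k * θ t) I t)
    (hpos : ∀ t ∈ I, 0 < θ t) :
    ∀ t₁ ∈ I, ∀ t₂ ∈ I,
      (1 / 2) * Real.log ((y t₁) ^ 2 + a * k * y t₁ * θ t₁ + k * (θ t₁) ^ 2) -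
        (a / b) * Real.arctan ((a * θ t₁ + (2 / k) * y t₁) / (b * θ t₁)) =
      (1 / 2) * Real.log ((y t₂) ^ 2 + a * k * y t₂ * θ t₂ + k * (θ t₂) ^ 2) -
        (a / b) * Real.arctan ((a * θ t₂ + (2 / k) * y t₂) / (b * θ t₂)) := by
  have hπ : (0:ℝ) < π := Real.pi_pos
  have hk0 : 0 < k := lt_trans (by positivity) hk
  have hb2 : b ^ 2 = 4 / k - a ^ 2 := by
    rw [hb, Real.sq_sqrt]
    have : a ^ 2 < 4 / k := by
      rw [lt_div_iff₀ hk0]; linarith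
    linarith
  have hbpos : 0 < b := by
    rw [hb]
    apply Real.sqrt_pos.2
    have : a ^ 2 < 4 / k := by rw [lt_div_iff₀ hk0]; linarith
    linarith
  set V : ℝ → ℝ := fun t =>
    (1 / 2) * Real.log ((y t) ^ 2 + a * k * y t * θ t + k * (θ t) ^ 2) -
      (a / b) * Real.arctan ((a * θ t + (2 / k) * y t) / (b * θ t)) with hV
  have hQpos : ∀ t ∈ I, 0 < (y t) ^ 2 + a * k * y t * θ t + k * (θ t) ^ 2 := by
    intro t ht
    have h1 := hpos t ht
    nlinarith [sq_nonneg (y t + a * k * θ t / 2), sq_nonneg (θ t), mul_pos hk0 (mul_pos h1 h1)]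
  have hVderiv : ∀ t ∈ I, HasDerivWithinAt V 0 I t := by
    intro t ht
    have hyt := hy t ht
    have hθt := hθ t ht
    have hQ0 := hQpos t ht
    have hθpos := hpos t ht
    have hden : b * θ t ≠ 0 := by positivity
    -- derivative of Q
    have hQ : HasDerivWithinAt (fun t => (y t) ^ 2 + a * k * y t * θ t + k * (θ t) ^ 2)
        (-(a * k) * ((y t) ^ 2 + a * k * y t * θ t + k * (θ t) ^ 2)) I t := by
      have := ((hyt.pow 2).add
          (((hyt.const_mul (a * k)).mul hθt))).add ((hθt.pow 2).const_mul k)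
      refine this.congr_deriv ?_
      ring
    have hlog : HasDerivWithinAt (fun t => Real.log ((y t) ^ 2 + a * k * y t * θ t + k * (θ t) ^ 2))
        (-(a * k)) I t := by
      have := hQ.log (ne_of_gt hQ0)
      refine this.congr_deriv ?_
      rw [mul_div_assoc, div_self (ne_of_gt hQ0), mul_one]
    -- derivative of u = (aθ + (2/k)y)/(bθ)
    have hN : HasDerivWithinAt (fun t => a * θ t + (2 / k) * y t)
        (a * y t + (2 / k) * (-(a * k) * y t - k * θ t)) I t :=
      (hθt.const_mul a).add (hyt.const_mul (2 / k))
    have hD : HasDerivWithinAt (fun t => b * θ t) (b * y t) I t := hθt.const_mul b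
    have hu : HasDerivWithinAt (fun t => (a * θ t + (2 / k) * y t) / (b * θ t))
        (((a * y t + (2 / k) * (-(a * k) * y t - k * θ t)) * (b * θ t) -
          (a * θ t + (2 / k) * y t) * (b * y t)) / (b * θ t) ^ 2) I t :=
      hN.div hD hden
    have harctan : HasDerivWithinAt
        (fun t => Real.arctan ((a * θ t + (2 / k) * y t) / (b * θ t))) (-(b * k) / 2) I t := by
      have := hu.arctan
      refine this.congr_deriv ?_
      have hb2' : k * b ^ 2 = 4 - a ^ 2 * k := by
        rw [hb2]; field_simp
      have h1 : (1 : ℝ) + ((a * θ t + (2 / k) * y t) / (b * θ t)) ^ 2 =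
          (4 / k ^ 2) * ((y t) ^ 2 + a * k * y t * θ t + k * (θ t) ^ 2) / (b * θ t) ^ 2 := by
        field_simp
        linear_combination (θ t ^ 2 * k) * hb2'
      rw [h1]
      have hQne : (y t) ^ 2 + a * k * y t * θ t + k * (θ t) ^ 2 ≠ 0 := ne_of_gt hQ0
      field_simp
      rw [div_eq_iff (by intro h0; apply hQne; linear_combination h0)]
      ring
    have := (hlog.const_mul (1 / 2 : ℝ)).sub (harctan.const_mul (a / b))
    refine this.congr_deriv ?_
    field_simp
    ring
  -- conclude constancy on the convex set I
  have hconv : Convex ℝ I := hI.convex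
  have hfd : ∀ t ∈ I, HasFDerivWithinAt V (0 : ℝ →L[ℝ] ℝ) I t := by
    intro t ht
    have h := (hVderiv t ht).hasFDerivWithinAt
    refine h.congr_fderiv ?_
    ext x
    simp
  intro t₁ ht₁ t₂ ht₂
  have hle := hconv.norm_image_sub_le_of_norm_hasFDerivWithin_le
    (C := 0) (fun t ht => hfd t ht) (fun t ht => by simp) ht₂ ht₁
  have : ‖V t₁ - V t₂‖ ≤ 0 := by simpa using hle
  have : V t₁ = V t₂ := by
    have := norm_sub_eq_zero_iff.mp (le_antisymm this (norm_nonneg _))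
    exact this
  exact this
end

section
/- Let a > 0, k > 1/π, p = π − 1/k and c = √(a² + 4p). Let (y, θ) : I → ℝ² be a differentiable solution on an interval I of the linear system θ̇ = y, ẏ = (1/p)(a y + θ + π), such that u(t) := y(t) + ((c−a)/(2p))(π + θ(t)) > 0 and w(t) := y(t) − ((c+a)/(2p))(π + θ(t)) > 0 for all t ∈ I. Then the function t ↦ u(t)^{(c−a)/c} · w(t)^{(c+a)/c} is constant on I (a first integral of the system in this region). -/
open Real

/-- on the segment `−π ≤ θ ≤ −1/k`, along solutions of
`θ̇ = y`, `ẏ = (1/p)(ay + θ + π)` staying in the region where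
`u = y + ((c−a)/(2p))(π + θ) > 0` and `w = y − ((c+a)/(2p))(π + θ) > 0`, the quantity
`u^{(c−a)/c} · w^{(c+a)/c}` is a first integral. -/
theorem domain_III_first_integral
    (a k : ℝ) (ha : 0 < a) (hk : 1 / π < k)
    (p : ℝ) (hp : p = π - 1 / k)
    (c : ℝ) (hc : c = Real.sqrt (a ^ 2 + 4 * p))
    (I : Set ℝ) (hI : I.OrdConnected)
    (y θ : ℝ → ℝ)
    (hθ : ∀ t ∈ I, HasDerivWithinAt θ (y t) I t)
    (hy : ∀ t ∈ I, HasDerivWithinAt y ((1 / p) * (a * y t + θ t + π)) I t)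
    (hu : ∀ t ∈ I, 0 < y t + ((c - a) / (2 * p)) * (π + θ t))
    (hw : ∀ t ∈ I, 0 < y t - ((c + a) / (2 * p)) * (π + θ t)) :
    ∀ t₁ ∈ I, ∀ t₂ ∈ I,
      (y t₁ + ((c - a) / (2 * p)) * (π + θ t₁)) ^ ((c - a) / c) *
        (y t₁ - ((c + a) / (2 * p)) * (π + θ t₁)) ^ ((c + a) / c) =
      (y t₂ + ((c - a) / (2 * p)) * (π + θ t₂)) ^ ((c - a) / c) *
        (y t₂ - ((c + a) / (2 * p)) * (π + θ t₂)) ^ ((c + a) / c) := by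
  -- basic positivity facts
  have hπ : (0:ℝ) < π := Real.pi_pos
  have hk0 : 0 < k := lt_trans (by positivity) hk
  have hp0 : 0 < p := by
    rw [hp, sub_pos]
    rw [div_lt_iff₀ hπ] at hk
    rw [div_lt_iff₀ hk0]
    linarith
  have hc0 : 0 < c := by
    rw [hc]; apply Real.sqrt_pos.mpr; nlinarith
  have hc2 : c ^ 2 = a ^ 2 + 4 * p := by
    rw [hc, sq]; exact Real.mul_self_sqrt (by nlinarith)
  set α := (c - a) / c with hα
  set β := (c + a) / c with hβ
  set u : ℝ → ℝ := fun t => y t + ((c - a) / (2 * p)) * (π + θ t) with hudef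
  set w : ℝ → ℝ := fun t => y t - ((c + a) / (2 * p)) * (π + θ t) with hwdef
  have hu' : ∀ t ∈ I, HasDerivWithinAt u (((a + c) / (2 * p)) * u t) I t := by
    intro t ht
    have h := (hy t ht).add (((hθ t ht).const_add π).const_mul ((c - a) / (2 * p)))
    convert h using 1
    · rfl
    · rfl
    · rfl
    have hp' : p ≠ 0 := ne_of_gt hp0
    simp only [hudef]
    have hp' : p ≠ 0 := ne_of_gt hp0
    field_simp
    linear_combination (π + θ t) * hc2
  have hw' : ∀ t ∈ I, HasDerivWithinAt w (((a - c) / (2 * p)) * w t) I t := by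
    intro t ht
    have h := (hy t ht).sub (((hθ t ht).const_add π).const_mul ((c + a) / (2 * p)))
    convert h using 1
    · rfl
    · rfl
    · rfl
    have hp' : p ≠ 0 := ne_of_gt hp0
    simp only [hwdef]
    have hp' : p ≠ 0 := ne_of_gt hp0
    field_simp
    linear_combination (π + θ t) * hc2
  set F : ℝ → ℝ := fun t => u t ^ α * w t ^ β with hFdef
  have hF' : ∀ t ∈ I, HasDerivWithinAt F 0 I t := by
    intro t ht
    have hut : 0 < u t := hu t ht
    have hwt : 0 < w t := hw t ht
    have h1 : HasDerivWithinAt (fun s => u s ^ α)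
        ((((a + c) / (2 * p)) * u t) * α * u t ^ (α - 1)) I t :=
      (hu' t ht).rpow_const (Or.inl (ne_of_gt hut))
    have h2 : HasDerivWithinAt (fun s => w s ^ β)
        ((((a - c) / (2 * p)) * w t) * β * w t ^ (β - 1)) I t :=
      (hw' t ht).rpow_const (Or.inl (ne_of_gt hwt))
    have h := h1.mul h2
    convert h using 1
    · rfl
    · rfl
    · rfl
    have e1 : u t ^ (α - 1) = u t ^ α / u t := by
      rw [Real.rpow_sub hut, Real.rpow_one]
    have e2 : w t ^ (β - 1) = w t ^ β / w t := by
      rw [Real.rpow_sub hwt, Real.rpow_one]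
    rw [e1, e2]
    have hut' : u t ≠ 0 := ne_of_gt hut
    have hwt' : w t ≠ 0 := ne_of_gt hwt
    have hp' : p ≠ 0 := ne_of_gt hp0
    have hc' : c ≠ 0 := ne_of_gt hc0
    field_simp [hα, hβ]
    ring
  intro t₁ ht₁ t₂ ht₂
  have hconv : Convex ℝ I := convex_iff_ordConnected.mpr hI
  have := hconv.norm_image_sub_le_of_norm_hasDerivWithin_le
    (f := F) (f' := fun _ => (0:ℝ)) (C := 0)
    (fun x hx => hF' x hx) (fun x _ => by simp) ht₂ ht₁
  have hz : F t₁ = F t₂ := by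
    have h0 : ‖F t₁ - F t₂‖ ≤ 0 := by simpa using this
    exact sub_eq_zero.mp (norm_le_zero_iff.mp h0)
  simpa [hFdef, hudef, hwdef] using hz
end

section
/- Let a > 0, k > 1/π with a²k > 4, b = √(a² − 4/k) and c = √(a² + 4(π − 1/k)). The function f(d) = (d − (a−b)/2)^{(b−a)/b} · (d − (a+b)/2)^{(b+a)/b} is strictly increasing on ((a+b)/2, ∞), tends to 0 as d → ((a+b)/2)⁺ and to +∞ as d → +∞; consequently the equation (d − (a−b)/2)^{(b−a)/b} (d − (a+b)/2)^{(b+a)/b} = π((c+b)/(c−b))^{a/b} has a unique solution d > (a+b)/2. -/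
open Real Filter Topology

lemma rpow_aux_node
    (p q α β : ℝ) (hpq : p < q) (hq0 : 0 ≤ q) (hα : α ≤ 0) (hβ : 0 < β)
    (hsum : α + β = 2) (hzero : α * q + β * p = 0) :
    StrictMonoOn (fun d : ℝ => (d - p) ^ α * (d - q) ^ β) (Set.Ioi q) ∧
    Tendsto (fun d : ℝ => (d - p) ^ α * (d - q) ^ β) (𝓝[>] q) (𝓝 0) ∧
    Tendsto (fun d : ℝ => (d - p) ^ α * (d - q) ^ β) atTop atTop ∧
    ∀ R : ℝ, 0 < R → ∃! d : ℝ, q < d ∧ (d - p) ^ α * (d - q) ^ β = R := by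
  set F : ℝ → ℝ := fun d => (d - p) ^ α * (d - q) ^ β with hF
  have hcont : ContinuousOn F (Set.Ioi q) := by
    apply ContinuousOn.mul
    · exact ContinuousOn.rpow_const (by fun_prop)
        (fun x hx => Or.inl (by have : q < x := hx; nlinarith))
    · exact ContinuousOn.rpow_const (by fun_prop)
        (fun x hx => Or.inl (by have : q < x := hx; nlinarith))
  have hderiv : ∀ x ∈ Set.Ioi q, HasDerivAt F
      ((x - p) ^ (α - 1) * (x - q) ^ (β - 1) * (2 * x)) x := by
    intro x hx
    have hxq : (0:ℝ) < x - q := by have : q < x := hx; linarith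
    have hxp : (0:ℝ) < x - p := by have : q < x := hx; linarith
    have h1 : HasDerivAt (fun d : ℝ => (d - p) ^ α) (α * (x - p) ^ (α - 1)) x := by
      have := (Real.hasDerivAt_rpow_const (x := x - p) (p := α)
        (Or.inl hxp.ne')).comp x ((hasDerivAt_id x).sub_const p)
      simpa [Function.comp_def] using this
    have h2 : HasDerivAt (fun d : ℝ => (d - q) ^ β) (β * (x - q) ^ (β - 1)) x := by
      have := (Real.hasDerivAt_rpow_const (x := x - q) (p := β)
        (Or.inl hxq.ne')).comp x ((hasDerivAt_id x).sub_const q)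
      simpa [Function.comp_def] using this
    have hD := h1.mul h2
    have e1 : (x - p) ^ α = (x - p) ^ (α - 1) * (x - p) := by
      rw [← Real.rpow_add_one hxp.ne' (α - 1)]; norm_num
    have e2 : (x - q) ^ β = (x - q) ^ (β - 1) * (x - q) := by
      rw [← Real.rpow_add_one hxq.ne' (β - 1)]; norm_num
    have elin : α * (x - q) + β * (x - p) = 2 * x := by
      have : α * (x - q) + β * (x - p) = (α + β) * x - (α * q + β * p) := by ring
      rw [this, hsum, hzero]; ring
    have : α * (x - p) ^ (α - 1) * (x - q) ^ β + (x - p) ^ α * (β * (x - q) ^ (β - 1))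
        = (x - p) ^ (α - 1) * (x - q) ^ (β - 1) * (2 * x) := by
      rw [e1, e2, ← elin]; ring
    rw [← this]
    exact hD
  have hmono : StrictMonoOn F (Set.Ioi q) := by
    apply strictMonoOn_of_deriv_pos (convex_Ioi q) hcont
    intro x hx
    rw [interior_Ioi] at hx
    have hxq : (0:ℝ) < x - q := by have : q < x := hx; linarith
    have hxp : (0:ℝ) < x - p := by have : q < x := hx; linarith
    have hx0 : (0:ℝ) < x := lt_of_le_of_lt hq0 hx
    rw [(hderiv x hx).deriv]
    have := Real.rpow_pos_of_pos hxp (α - 1)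
    have := Real.rpow_pos_of_pos hxq (β - 1)
    positivity
  have htend0 : Tendsto F (𝓝[>] q) (𝓝 0) := by
    have h1 : ContinuousAt (fun d : ℝ => (d - p) ^ α) q :=
      ContinuousAt.rpow_const (by fun_prop) (Or.inl (by simp; intro h; linarith))
    have h2 : ContinuousAt (fun d : ℝ => (d - q) ^ β) q :=
      ContinuousAt.rpow_const (by fun_prop) (Or.inr hβ.le)
    have t1 : Tendsto (fun d : ℝ => (d - p) ^ α) (𝓝[>] q) (𝓝 ((q - p) ^ α)) :=
      h1.tendsto.mono_left nhdsWithin_le_nhds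
    have t2 : Tendsto (fun d : ℝ => (d - q) ^ β) (𝓝[>] q) (𝓝 ((q - q) ^ β)) :=
      h2.tendsto.mono_left nhdsWithin_le_nhds
    have := t1.mul t2
    simpa [Real.zero_rpow hβ.ne'] using this
  have htop : Tendsto F atTop atTop := by
    have key : ∀ d : ℝ, 2 * q - p ≤ d → 2 ^ α * (d - q) ^ 2 ≤ F d := by
      intro d hd
      have hdq : (0:ℝ) < d - q := by linarith
      have hdp : (0:ℝ) < d - p := by linarith
      have hle : d - p ≤ 2 * (d - q) := by linarith
      have h1 : (2 * (d - q)) ^ α ≤ (d - p) ^ α :=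
        Real.rpow_le_rpow_of_nonpos hdp hle hα
      have h2 : (2 * (d - q)) ^ α = 2 ^ α * (d - q) ^ α :=
        Real.mul_rpow (by norm_num) hdq.le
      have h3 : (2 ^ α * (d - q) ^ α) * (d - q) ^ β ≤ F d := by
        rw [← h2]
        exact mul_le_mul_of_nonneg_right h1 (Real.rpow_pos_of_pos hdq β).le
      have h4 : (2 ^ α * (d - q) ^ α) * (d - q) ^ β = 2 ^ α * (d - q) ^ 2 := by
        rw [mul_assoc, ← Real.rpow_add hdq, hsum]
        norm_num [Real.rpow_two]
      linarith [h3, h4.symm.le]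
    have hsq : Tendsto (fun d : ℝ => (d - q) ^ 2) atTop atTop := by
      exact (tendsto_pow_atTop (two_ne_zero)).comp (tendsto_atTop_add_const_right atTop (-q) tendsto_id)
    have hbase : Tendsto (fun d : ℝ => 2 ^ α * (d - q) ^ 2) atTop atTop :=
      hsq.const_mul_atTop (Real.rpow_pos_of_pos (by norm_num) α)
    exact tendsto_atTop_mono' atTop (eventually_atTop.2 ⟨2 * q - p, key⟩) hbase
  refine ⟨hmono, htend0, htop, ?_⟩
  intro R hR
  obtain ⟨d₁, hd₁mem, hd₁⟩ := ((eventually_mem_nhdsWithin.and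
    (htend0.eventually (gt_mem_nhds hR)))).exists
  have hd₁q : q < d₁ := hd₁mem
  obtain ⟨d₂, hd₂gt, hd₂⟩ := ((eventually_gt_atTop d₁).and
    (htop.eventually_gt_atTop R)).exists
  have hsub : Set.Icc d₁ d₂ ⊆ Set.Ioi q := fun x hx => lt_of_lt_of_le hd₁q hx.1
  have hIVT := intermediate_value_Icc hd₂gt.le (hcont.mono hsub)
  obtain ⟨d, hdmem, hFd⟩ := hIVT ⟨hd₁.le, hd₂.le⟩
  have hdq : q < d := hsub hdmem
  refine ⟨d, ⟨hdq, hFd⟩, ?_⟩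
  rintro y ⟨hyq, hFy⟩
  exact hmono.injOn hyq hdq (hFy.trans hFd.symm)

/-- in the node case `a²k > 4`, the function
`f(d) = (d − (a−b)/2)^{(b−a)/b} (d − (a+b)/2)^{(b+a)/b}` is strictly increasing on
`((a+b)/2, ∞)`, tends to `0` as `d → ((a+b)/2)⁺`, tends to `+∞` as `d → +∞`, and the
equation `f(d) = π((c+b)/(c−b))^{a/b}` has a unique solution `d > (a+b)/2`. -/
theorem separatrix_equation_node_case
    (a k : ℝ) (ha : 0 < a) (hk : 1 / π < k) (hnode : 4 < a ^ 2 * k)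
    (b : ℝ) (hb : b = Real.sqrt (a ^ 2 - 4 / k))
    (c : ℝ) (hc : c = Real.sqrt (a ^ 2 + 4 * (π - 1 / k))) :
    StrictMonoOn
      (fun d : ℝ => (d - (a - b) / 2) ^ ((b - a) / b) * (d - (a + b) / 2) ^ ((b + a) / b))
      (Set.Ioi ((a + b) / 2)) ∧
    Tendsto
      (fun d : ℝ => (d - (a - b) / 2) ^ ((b - a) / b) * (d - (a + b) / 2) ^ ((b + a) / b))
      (𝓝[>] ((a + b) / 2)) (𝓝 0) ∧
    Tendsto
      (fun d : ℝ => (d - (a - b) / 2) ^ ((b - a) / b) * (d - (a + b) / 2) ^ ((b + a) / b))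
      atTop atTop ∧
    ∃! d : ℝ, (a + b) / 2 < d ∧
      (d - (a - b) / 2) ^ ((b - a) / b) * (d - (a + b) / 2) ^ ((b + a) / b) =
        π * ((c + b) / (c - b)) ^ (a / b) := by
  have hπ : (0:ℝ) < π := Real.pi_pos
  have hk0 : (0:ℝ) < k := lt_trans (by positivity) hk
  have h4k : 4 / k < a ^ 2 := (div_lt_iff₀ hk0).2 hnode
  have hb0 : 0 < b := hb ▸ Real.sqrt_pos.2 (by linarith)
  have hb2 : b ^ 2 = a ^ 2 - 4 / k := by
    rw [hb, Real.sq_sqrt (by linarith)]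
  have hba : b < a := by nlinarith [div_pos (by norm_num : (0:ℝ) < 4) hk0]
  have hk1 : 1 / k < π := by
    rw [div_lt_iff₀ hk0]
    have := (div_lt_iff₀ hπ).1 hk
    nlinarith
  have hc2 : c ^ 2 = a ^ 2 + 4 * (π - 1 / k) := by
    rw [hc, Real.sq_sqrt (by nlinarith [sq_nonneg a])]
  have hc0 : 0 ≤ c := hc ▸ Real.sqrt_nonneg _
  have hcb : b < c := by nlinarith [hπ, hk1, sq_nonneg (b - c), sq_nonneg (b + c)]
  have hR : 0 < π * ((c + b) / (c - b)) ^ (a / b) := by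
    have h1 : (0:ℝ) < (c + b) / (c - b) := div_pos (by linarith) (by linarith)
    exact mul_pos hπ (Real.rpow_pos_of_pos h1 _)
  obtain ⟨h1, h2, h3, h4⟩ := rpow_aux_node ((a - b) / 2) ((a + b) / 2)
    ((b - a) / b) ((b + a) / b)
    (by linarith)
    (by linarith)
    (div_nonpos_of_nonpos_of_nonneg (by linarith) hb0.le)
    (by positivity)
    (by field_simp; ring)
    (by field_simp; ring)
  exact ⟨h1, h2, h3, h4 _ hR⟩
end

section
/- For every a > 0 there exists a unique d > a/2 satisfying (d − a/2)·exp(a/(a − 2d)) = √π · exp(a/(2√π)); moreover, a number d > a/2 satisfies this equation if and only if w := a/(2d − a) > 0 satisfies w·e^{w} = (a/(2√π))·exp(−a/(2√π)) (so that d = (a/2)(1 + 1/W(a/(2√π)·e^{−a/(2√π)})) in terms of the Lambert W function). -/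
open Real

/-- in the degenerate-node case, for every `a > 0` there is a unique
`d > a/2` with `(d − a/2)·exp(a/(a − 2d)) = √π·exp(a/(2√π))`; moreover `d > a/2`
satisfies the equation iff `w = a/(2d − a) > 0` satisfies
`w·e^w = (a/(2√π))·exp(−a/(2√π))` (giving `d` via the Lambert W function). -/
theorem separatrix_equation_degenerate_case (a : ℝ) (ha : 0 < a) :
    (∃! d : ℝ, a / 2 < d ∧
      (d - a / 2) * Real.exp (a / (a - 2 * d)) =
        Real.sqrt π * Real.exp (a / (2 * Real.sqrt π))) ∧
    ∀ d : ℝ, a / 2 < d →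
      (0 < a / (2 * d - a) ∧
        ((d - a / 2) * Real.exp (a / (a - 2 * d)) =
            Real.sqrt π * Real.exp (a / (2 * Real.sqrt π)) ↔
          (a / (2 * d - a)) * Real.exp (a / (2 * d - a)) =
            (a / (2 * Real.sqrt π)) * Real.exp (-(a / (2 * Real.sqrt π))))) := by
  have hs : 0 < Real.sqrt π := Real.sqrt_pos.mpr Real.pi_pos
  set s := Real.sqrt π with hsdef
  set c := a / (2 * s) with hcdef
  have hc0 : 0 < c := by positivity
  have hcs : c * (2 * s) = a := div_mul_cancel₀ a (by positivity)
  -- key equivalence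
  have key : ∀ d : ℝ, a / 2 < d →
      ((d - a / 2) * Real.exp (a / (a - 2 * d)) = s * Real.exp c ↔
        (a / (2 * d - a)) * Real.exp (a / (2 * d - a)) = c * Real.exp (-c)) := by
    intro d hd
    have hu : 0 < 2 * d - a := by linarith
    set w := a / (2 * d - a) with hwdef
    have hw : 0 < w := by positivity
    have hwu : w * (2 * d - a) = a := div_mul_cancel₀ a hu.ne'
    have hrw : a / (a - 2 * d) = -w := by
      rw [show a - 2 * d = -(2 * d - a) by ring, div_neg]
    rw [hrw, Real.exp_neg, Real.exp_neg]
    have hE1 : (0:ℝ) < Real.exp w := Real.exp_pos w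
    have hE2 : (0:ℝ) < Real.exp c := Real.exp_pos c
    constructor
    · intro h
      -- h : (d - a/2) * (exp w)⁻¹ = s * exp c
      have h' : d - a / 2 = s * Real.exp c * Real.exp w := by
        field_simp at h
        linarith [h]
      have h'' : w * Real.exp w * Real.exp c = c := by
        have e1 : s * (w * Real.exp w * Real.exp c) = s * c := by
          calc s * (w * Real.exp w * Real.exp c)
              = w * (s * Real.exp c * Real.exp w) := by ring
            _ = w * (d - a / 2) := by rw [← h']
            _ = (w * (2 * d - a)) / 2 := by ring
            _ = a / 2 := by rw [hwu]
            _ = s * c := by linarith [hcs]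
        exact mul_left_cancel₀ hs.ne' e1
      field_simp
      linarith [h'']
    · intro h
      -- h : w * exp w = c * (exp c)⁻¹
      have h' : w * Real.exp w * Real.exp c = c := by
        rw [h]; field_simp
      have hgoal : (d - a / 2) * (Real.exp w)⁻¹ * (w * Real.exp w) =
          s * Real.exp c * (w * Real.exp w) := by
        have l1 : (d - a / 2) * (Real.exp w)⁻¹ * (w * Real.exp w) = w * (d - a / 2) := by
          field_simp
        have l2 : s * Real.exp c * (w * Real.exp w) = s * c := by
          calc s * Real.exp c * (w * Real.exp w) = s * (w * Real.exp w * Real.exp c) := by ring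
            _ = s * c := by rw [h']
        rw [l1, l2]
        have : w * (2 * d - a) = a := hwu
        nlinarith [hcs]
      exact mul_right_cancel₀ (by positivity) hgoal
  refine ⟨?_, fun d hd => ⟨div_pos ha (by linarith), key d hd⟩⟩
  -- existence and uniqueness
  have mono : ∀ x y : ℝ, 0 < x → 0 < y →
      x * Real.exp x = y * Real.exp y → x = y := by
    intro x y hx hy h
    rcases lt_trichotomy x y with hlt | heq | hgt
    · exfalso
      have := Real.exp_lt_exp.mpr hlt
      nlinarith [Real.exp_pos x, Real.exp_pos y]
    · exact heq
    · exfalso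
      have := Real.exp_lt_exp.mpr hgt
      nlinarith [Real.exp_pos x, Real.exp_pos y]
  set t := c * Real.exp (-c) with htdef
  have ht0 : 0 < t := by positivity
  -- find w₀ > 0 with w₀ * exp w₀ = t
  obtain ⟨w₀, hw₀mem, hw₀⟩ :
      ∃ w₀ ∈ Set.Icc (0:ℝ) t, w₀ * Real.exp w₀ = t := by
    have hcont : ContinuousOn (fun w : ℝ => w * Real.exp w) (Set.Icc 0 t) :=
      (continuous_id.mul Real.continuous_exp).continuousOn
    have hsub := intermediate_value_Icc (le_of_lt ht0) hcont
    have hmem : t ∈ Set.Icc ((0:ℝ) * Real.exp 0) (t * Real.exp t) := by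
      constructor
      · simp; positivity
      · nlinarith [Real.one_le_exp (le_of_lt ht0)]
    obtain ⟨w₀, hmem', heq⟩ := hsub hmem
    exact ⟨w₀, hmem', heq⟩
  have hw₀pos : 0 < w₀ := by
    rcases lt_or_eq_of_le hw₀mem.1 with h | h
    · exact h
    · exfalso; rw [← h] at hw₀; simp at hw₀; linarith
  set d₀ := (a / w₀ + a) / 2 with hd₀def
  have hd₀gt : a / 2 < d₀ := by
    have : 0 < a / w₀ := by positivity
    rw [hd₀def]; linarith
  have hwd₀ : a / (2 * d₀ - a) = w₀ := by
    rw [hd₀def, show 2 * ((a / w₀ + a) / 2) - a = a / w₀ by ring]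
    rw [div_div_eq_mul_div]
    field_simp
  refine ⟨d₀, ⟨hd₀gt, ?_⟩, ?_⟩
  · rw [key d₀ hd₀gt, hwd₀, hw₀]
  · rintro d ⟨hd, heqn⟩
    rw [key d hd] at heqn
    have hu : 0 < 2 * d - a := by linarith
    have hw : 0 < a / (2 * d - a) := by positivity
    have := mono _ _ hw hw₀pos (by rw [heqn, hw₀])
    -- a / (2d - a) = w₀ ⟹ d = d₀
    have h2 : 2 * d - a = a / w₀ := by
      field_simp at this ⊢
      linarith [this]
    rw [hd₀def]
    linarith [h2]
end

section
/- Let a > 0, k > 1/π with a²k < 4, b = √(4/k − a²) and c = √(a² + 4(π − 1/k)). The function g(d) = (d² − ad + 1/k)·exp((2a/b)·arctan(b/(a − 2d))) is strictly increasing on (a/2, ∞) and tends to +∞ as d → +∞, and its limit as d → (a/2)⁺ equals (b²/4)·exp(−πa/b) < π·exp((2a/b)·arctan(b/c)); consequently the equation (d² − ad + 1/k)·exp((2a/b)·arctan(b/(a − 2d))) = π·exp((2a/b)·arctan(b/c)) has a unique solution d > a/2. -/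
open Real Filter Topology

set_option maxHeartbeats 1600000 in
/-- in the focus case `a²k < 4`, the function
`g(d) = (d² − ad + 1/k)·exp((2a/b)·arctan(b/(a − 2d)))` is strictly increasing on
`(a/2, ∞)`, tends to `+∞` at `+∞`, tends to `(b²/4)·exp(−πa/b)` as `d → (a/2)⁺`, this
limit is `< π·exp((2a/b)·arctan(b/c))`, and the equation
`g(d) = π·exp((2a/b)·arctan(b/c))` has a unique solution `d > a/2`. -/
theorem separatrix_equation_focus_case
    (a k : ℝ) (ha : 0 < a) (hk : 1 / π < k) (hfocus : a ^ 2 * k < 4)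
    (b : ℝ) (hb : b = Real.sqrt (4 / k - a ^ 2))
    (c : ℝ) (hc : c = Real.sqrt (a ^ 2 + 4 * (π - 1 / k))) :
    StrictMonoOn
      (fun d : ℝ => (d ^ 2 - a * d + 1 / k) *
        Real.exp ((2 * a / b) * Real.arctan (b / (a - 2 * d))))
      (Set.Ioi (a / 2)) ∧
    Tendsto
      (fun d : ℝ => (d ^ 2 - a * d + 1 / k) *
        Real.exp ((2 * a / b) * Real.arctan (b / (a - 2 * d))))
      atTop atTop ∧
    Tendsto
      (fun d : ℝ => (d ^ 2 - a * d + 1 / k) *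
        Real.exp ((2 * a / b) * Real.arctan (b / (a - 2 * d))))
      (𝓝[>] (a / 2)) (𝓝 ((b ^ 2 / 4) * Real.exp (-(π * a) / b))) ∧
    (b ^ 2 / 4) * Real.exp (-(π * a) / b) <
      π * Real.exp ((2 * a / b) * Real.arctan (b / c)) ∧
    ∃! d : ℝ, a / 2 < d ∧
      (d ^ 2 - a * d + 1 / k) * Real.exp ((2 * a / b) * Real.arctan (b / (a - 2 * d))) =
        π * Real.exp ((2 * a / b) * Real.arctan (b / c)) := by
  have hπ := Real.pi_pos
  have hk0 : 0 < k := lt_trans (by positivity) hk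
  have hikπ : 1 / k < π := by
    rw [div_lt_iff₀ hπ] at hk
    rw [div_lt_iff₀ hk0]
    linarith
  have ha2 : a ^ 2 < 4 / k := by rw [lt_div_iff₀ hk0]; exact hfocus
  have hb2 : b ^ 2 = 4 / k - a ^ 2 := by
    rw [hb]; exact Real.sq_sqrt (by linarith)
  have hbpos : 0 < b := by
    rw [hb]; exact Real.sqrt_pos.2 (by linarith)
  have hcpos : 0 < c := by
    rw [hc]; apply Real.sqrt_pos.2; nlinarith [sq_nonneg a]
  set g := fun d : ℝ => (d ^ 2 - a * d + 1 / k) *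
      Real.exp ((2 * a / b) * Real.arctan (b / (a - 2 * d))) with hgdef
  -- derivative
  have hderiv : ∀ d : ℝ, a / 2 < d →
      HasDerivAt g (2 * d * Real.exp ((2 * a / b) * Real.arctan (b / (a - 2 * d)))) d := by
    intro d hd
    have hne : a - 2 * d ≠ 0 := by nlinarith
    have h4q : 4 * (d ^ 2 - a * d + 1 / k) = (2 * d - a) ^ 2 + b ^ 2 := by rw [hb2]; ring
    have hq : 0 < d ^ 2 - a * d + 1 / k := by
      nlinarith [sq_nonneg (2 * d - a), pow_pos hbpos 2]
    have h1 : HasDerivAt (fun d : ℝ => b / (a - 2 * d)) (2 * b / (a - 2 * d) ^ 2) d := by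
      have h := ((hasDerivAt_const d b).div
        ((hasDerivAt_id d).const_mul 2 |>.const_sub a) hne)
      refine h.congr_deriv ?_
      simp only [id_eq]
      field_simp
      ring
    have h2 := ((Real.hasDerivAt_arctan (b / (a - 2 * d))).comp d h1).const_mul (2 * a / b)
    have h3 := h2.exp
    have hq' : HasDerivAt (fun d : ℝ => d ^ 2 - a * d + 1 / k) (2 * d - a) d := by
      have := ((hasDerivAt_pow 2 d).sub ((hasDerivAt_id d).const_mul a)).add_const (1 / k)
      refine this.congr_deriv ?_; norm_num
    have h5 := hq'.mul h3
    refine h5.congr_deriv ?_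
    have hkey : (a - 2 * d) ^ 2 + b ^ 2 = 4 * (d ^ 2 - a * d + 1 / k) := by rw [hb2]; field_simp; ring
    have h1p : (1 + (b / (a - 2 * d)) ^ 2) = 4 * (d ^ 2 - a * d + 1 / k) / (a - 2 * d) ^ 2 := by
      rw [← hkey]; field_simp
    have hscal : (2 * a / b) * (1 / (1 + (b / (a - 2 * d)) ^ 2) * (2 * b / (a - 2 * d) ^ 2))
        = a / (d ^ 2 - a * d + 1 / k) := by
      have hgen2 : ∀ (B s q : ℝ), B ≠ 0 → s ≠ 0 → q ≠ 0 →
          (2 * a / B) * (1 / (4 * q / s ^ 2) * (2 * B / s ^ 2)) = a / q := by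
        intros B s q h1 h2 h3; field_simp; ring
      rw [h1p]; exact hgen2 b (a - 2 * d) _ hbpos.ne' hne hq.ne'
    simp only [Function.comp_apply]
    rw [hscal]
    have hgen : ∀ (q E : ℝ), q ≠ 0 → 2 * d * E = (2 * d - a) * E + q * (E * (a / q)) := by
      intro q E hq0; field_simp; ring
    exact (hgen _ _ hq.ne').symm
  -- strict monotonicity
  have hmono : StrictMonoOn g (Set.Ioi (a / 2)) := by
    apply strictMonoOn_of_deriv_pos (convex_Ioi _)
    · exact fun x hx => (hderiv x hx).continuousAt.continuousWithinAt
    · intro x hx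
      rw [interior_Ioi] at hx
      rw [(hderiv x hx).deriv]
      have hx0 : 0 < x := lt_trans (by positivity) hx
      positivity
  -- tendsto atTop
  have htop : Tendsto g atTop atTop := by
    have hEatTop : Tendsto (fun d : ℝ => Real.exp ((2 * a / b) * Real.arctan (b / (a - 2 * d))))
        atTop (𝓝 1) := by
      have hden : Tendsto (fun d : ℝ => 2 * d - a) atTop atTop := by
        have := tendsto_atTop_add_const_right atTop (-a)
          ((tendsto_id (α := ℝ)).const_mul_atTop two_pos)
        exact this.congr fun d => by simp only [id_eq]; ring
      have h0 : Tendsto (fun d : ℝ => b / (a - 2 * d)) atTop (𝓝 0) := by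
        have := (tendsto_const_nhds (x := -b) (f := atTop (α := ℝ))).div_atTop hden
        refine this.congr fun d => ?_
        rw [show a - 2 * d = -(2 * d - a) by ring, div_neg, neg_div]
      have h1 := (Real.continuous_arctan.tendsto 0).comp h0
      rw [Real.arctan_zero] at h1
      have h2 := h1.const_mul (2 * a / b)
      rw [mul_zero] at h2
      have h3 := (Real.continuous_exp.tendsto 0).comp h2
      rw [Real.exp_zero] at h3
      exact h3
    have hqtop : Tendsto (fun d : ℝ => d ^ 2 - a * d + 1 / k) atTop atTop := by
      have h1 : Tendsto (fun d : ℝ => d * (d + -a)) atTop atTop :=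
        tendsto_id.atTop_mul_atTop₀ (tendsto_atTop_add_const_right atTop (-a) tendsto_id)
      have := tendsto_atTop_add_const_right atTop (1 / k) h1
      exact this.congr fun d => by ring
    exact hqtop.atTop_mul_pos one_pos hEatTop
  -- tendsto at (a/2)^+
  have hlim : Tendsto g (𝓝[>] (a / 2)) (𝓝 ((b ^ 2 / 4) * Real.exp (-(π * a) / b))) := by
    have hbase : Tendsto (fun d : ℝ => b / (a - 2 * d)) (𝓝[>] (a / 2)) atBot := by
      have h1 : Tendsto (fun d : ℝ => 2 * d - a) (𝓝[>] (a / 2)) (𝓝[>] 0) := by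
        apply tendsto_nhdsWithin_of_tendsto_nhds_of_eventually_within
        · have hcont : Continuous fun d : ℝ => 2 * d - a := by continuity
          have := (hcont.tendsto (a / 2)).mono_left
            (nhdsWithin_le_nhds (s := Set.Ioi (a / 2)))
          have he : 2 * (a / 2) - a = 0 := by ring
          rwa [he] at this
        · filter_upwards [self_mem_nhdsWithin] with x hx
          simp only [Set.mem_Ioi] at hx ⊢
          linarith
      have h2 : Tendsto (fun d : ℝ => (2 * d - a)⁻¹) (𝓝[>] (a / 2)) atTop :=
        tendsto_inv_nhdsGT_zero.comp h1
      have h3 := h2.const_mul_atTop hbpos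
      have h4 := tendsto_neg_atTop_atBot.comp h3
      refine h4.congr fun d => ?_
      show -(b * (2 * d - a)⁻¹) = b / (a - 2 * d)
      rw [show a - 2 * d = -(2 * d - a) by ring, div_neg, div_eq_mul_inv]
    have harct : Tendsto (fun d : ℝ => Real.arctan (b / (a - 2 * d))) (𝓝[>] (a / 2))
        (𝓝 (-(π / 2))) :=
      ((Real.tendsto_arctan_atBot.mono_right nhdsWithin_le_nhds).comp hbase)
    have hE : Tendsto (fun d : ℝ => Real.exp ((2 * a / b) * Real.arctan (b / (a - 2 * d))))
        (𝓝[>] (a / 2)) (𝓝 (Real.exp (-(π * a) / b))) := by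
      have h2 := harct.const_mul (2 * a / b)
      have h3 := (Real.continuous_exp.tendsto _).comp h2
      have harg : (2 * a / b) * (-(π / 2)) = -(π * a) / b := by ring
      rw [harg] at h3
      exact h3
    have hqlim : Tendsto (fun d : ℝ => d ^ 2 - a * d + 1 / k) (𝓝[>] (a / 2)) (𝓝 (b ^ 2 / 4)) := by
      have hcont : Continuous fun d : ℝ => d ^ 2 - a * d + 1 / k := by continuity
      have := (hcont.tendsto (a / 2)).mono_left
        (nhdsWithin_le_nhds (s := Set.Ioi (a / 2)))
      have harg : (a / 2) ^ 2 - a * (a / 2) + 1 / k = b ^ 2 / 4 := by rw [hb2]; ring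
      rwa [harg] at this
    exact hqlim.mul hE
  -- the inequality
  have hIneq : (b ^ 2 / 4) * Real.exp (-(π * a) / b) <
      π * Real.exp ((2 * a / b) * Real.arctan (b / c)) := by
    have h1 : Real.exp (-(π * a) / b) < 1 := by
      rw [show (1 : ℝ) = Real.exp 0 from (Real.exp_zero).symm]
      apply Real.exp_lt_exp.2
      apply div_neg_of_neg_of_pos _ hbpos
      nlinarith
    have h2 : (1 : ℝ) < Real.exp ((2 * a / b) * Real.arctan (b / c)) := by
      rw [show (1 : ℝ) = Real.exp 0 from (Real.exp_zero).symm]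
      apply Real.exp_lt_exp.2
      apply mul_pos (by positivity)
      have := Real.arctan_strictMono (show (0:ℝ) < b / c by positivity)
      rwa [Real.arctan_zero] at this
    have h3 : b ^ 2 / 4 < π := by
      have h4 : 4 / k = 4 * (1 / k) := by ring
      rw [hb2, h4]
      nlinarith [sq_nonneg a]
    calc (b ^ 2 / 4) * Real.exp (-(π * a) / b)
        < (b ^ 2 / 4) * 1 := by
          apply mul_lt_mul_of_pos_left h1 (by positivity)
      _ = b ^ 2 / 4 := mul_one _
      _ < π := h3
      _ = π * 1 := (mul_one _).symm
      _ < π * Real.exp ((2 * a / b) * Real.arctan (b / c)) :=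
          mul_lt_mul_of_pos_left h2 hπ
  refine ⟨hmono, htop, hlim, hIneq, ?_⟩
  -- existence and uniqueness
  set T := π * Real.exp ((2 * a / b) * Real.arctan (b / c)) with hTdef
  obtain ⟨d₁, hd₁T, hd₁mem⟩ := ((hlim.eventually_lt_const hIneq).and self_mem_nhdsWithin).exists
  have hd₁ : a / 2 < d₁ := hd₁mem
  obtain ⟨d₂, hd₂T, hd₂gt⟩ :=
    ((htop.eventually_gt_atTop T).and (eventually_gt_atTop d₁)).exists
  have hd₁₂ : d₁ ≤ d₂ := le_of_lt hd₂gt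
  have hconton : ContinuousOn g (Set.Icc d₁ d₂) := fun x hx =>
    (hderiv x (lt_of_lt_of_le hd₁ hx.1)).continuousAt.continuousWithinAt
  have hTmem : T ∈ Set.Icc (g d₁) (g d₂) := ⟨le_of_lt hd₁T, le_of_lt hd₂T⟩
  obtain ⟨d₀, hd₀mem, hgd₀⟩ := intermediate_value_Icc hd₁₂ hconton hTmem
  have hd₀ : a / 2 < d₀ := lt_of_lt_of_le hd₁ hd₀mem.1
  refine ⟨d₀, ⟨hd₀, hgd₀⟩, ?_⟩
  intro y ⟨hy1, hy2⟩
  exact hmono.injOn hy1 hd₀ (hy2.trans hgd₀.symm)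
end

section
/- Let a > 0 with a² < 2π, and set b = √(2π − a²), c = √(2π + a²), a′ = π/(2a²), m₋ = (1 − √(4a′ + 1))/2. Then a·exp((1/2)·ln(m₋² − m₋ + a′) − (1/√(4a′ − 1))·arctan((1 − 2m₋)/√(4a′ − 1)) + π/(2√(4a′ − 1))) = √π · exp((a/b)·arctan(b/c)); i.e., for a² < 2π the Huque–Stensby pull-out frequency formula ω_po = (a²/τ₂)·exp(...) coincides with twice the lock-in frequency ω_l = (a√π/(2τ₂))·exp((a/b)·arctan(b/c)) of Theorem 1 in the case a²k < 4 with the triangular characteristic k = 2/π. -/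
open Real

/-- for `a > 0` with `a² < 2π`, with `b = √(2π − a²)`, `c = √(2π + a²)`,
`a′ = π/(2a²)` and `m₋ = (1 − √(4a′ + 1))/2`, the Huque–Stensby pull-out frequency
formula coincides with twice the lock-in frequency of Theorem 1 (triangular
characteristic `k = 2/π`, focus case):
`a·exp((1/2)ln(m₋² − m₋ + a′) − (1/√(4a′−1))·arctan((1 − 2m₋)/√(4a′−1)) + π/(2√(4a′−1)))
  = √π·exp((a/b)·arctan(b/c))`. -/
theorem huque_stensby_coincides_with_lockin
    (a : ℝ) (ha : 0 < a) (ha2 : a ^ 2 < 2 * π)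
    (b c a' m : ℝ)
    (hb : b = Real.sqrt (2 * π - a ^ 2))
    (hc : c = Real.sqrt (2 * π + a ^ 2))
    (ha' : a' = π / (2 * a ^ 2))
    (hm : m = (1 - Real.sqrt (4 * a' + 1)) / 2) :
    a * Real.exp ((1 / 2) * Real.log (m ^ 2 - m + a') -
        (1 / Real.sqrt (4 * a' - 1)) *
          Real.arctan ((1 - 2 * m) / Real.sqrt (4 * a' - 1)) +
        π / (2 * Real.sqrt (4 * a' - 1))) =
      Real.sqrt π * Real.exp ((a / b) * Real.arctan (b / c)) := by
  have hπ := Real.pi_pos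
  have ha0 : a ≠ 0 := ne_of_gt ha
  have hb0 : 0 < b := hb ▸ Real.sqrt_pos.mpr (by linarith)
  have hc0 : 0 < c := hc ▸ Real.sqrt_pos.mpr (by nlinarith [sq_nonneg a])
  have hb2 : b ^ 2 = 2 * π - a ^ 2 := by
    rw [hb, sq_sqrt (by linarith)]
  have hc2 : c ^ 2 = 2 * π + a ^ 2 := by
    rw [hc, sq_sqrt (by nlinarith [sq_nonneg a])]
  have h1 : Real.sqrt (4 * a' + 1) = c / a := by
    have h : 4 * a' + 1 = (c / a) ^ 2 := by
      rw [ha']; field_simp; nlinarith [hc2]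
    rw [h, Real.sqrt_sq (by positivity)]
  have h2 : Real.sqrt (4 * a' - 1) = b / a := by
    have h : 4 * a' - 1 = (b / a) ^ 2 := by
      rw [ha']; field_simp; nlinarith [hb2]
    rw [h, Real.sqrt_sq (by positivity)]
  have ht2 : (c / a) ^ 2 = 2 * π / a ^ 2 + 1 := by
    rw [div_pow, hc2]; field_simp
  have hm2 : m ^ 2 - m + a' = π / a ^ 2 := by
    rw [hm, h1, ha']; linear_combination ht2 / 4
  have h12m : 1 - 2 * m = c / a := by rw [hm, h1]; ring
  have hca : (c / a) / (b / a) = c / b := by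
    field_simp
  have harc : Real.arctan (c / b) = π / 2 - Real.arctan (b / c) := by
    have h := Real.arctan_inv_of_pos (show 0 < c / b by positivity)
    rw [show (c / b)⁻¹ = b / c by field_simp] at h
    linarith
  have hlog : Real.exp ((1 / 2) * Real.log (π / a ^ 2)) = Real.sqrt π / a := by
    have hs : Real.sqrt (π / a ^ 2) = Real.sqrt π / a := by
      rw [Real.sqrt_div hπ.le, Real.sqrt_sq ha.le]
    rw [show (1 / 2 : ℝ) * Real.log (π / a ^ 2) = Real.log (π / a ^ 2) / 2 by ring,
      ← Real.log_sqrt (by positivity), Real.exp_log (by rw [hs]; positivity), hs]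
  rw [hm2, h12m, h2, hca, harc]
  have hexp : (1 / 2) * Real.log (π / a ^ 2) -
      1 / (b / a) * (π / 2 - Real.arctan (b / c)) + π / (2 * (b / a)) =
      (1 / 2) * Real.log (π / a ^ 2) + (a / b) * Real.arctan (b / c) := by
    field_simp
    ring
  rw [hexp, Real.exp_add, hlog]
  field_simp
end
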